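/- Let T be a finite rooted tree of player-i decision points (infosets), where at each infoset I a finite action set A(I) is available and playing a ∈ A(I) leads to a set C(I,a) of child infosets. For plans σ (choosing one action per infoset) define the value V_I^t(σ) = u_{I}^t(σ(I)) + ∑_{I'∈C(I,σ(I))} V_{I'}^t(σ) for observed immediate utilities u_I^t, and let the cumulative subtree regret be R_{↓I}^T = max_σ ∑_{t=1}^T V_I^t(σ) − ∑_{t=1}^T V_I^t(σ^t), where σ^t is the plan played at time t. Then R_{↓I}^T = max_{a∈A(I)} ( ∑_{t=1}^T û_I^t(a) + ∑_{I'∈C(I,a)} R_{↓I'}^T ) − ∑_{t=1}^T û_I^t(σ^t(I)), where û_I^t(a) = u_I^t(a) + ∑_{I'∈C(I,a)} V_{I'}^t(σ^t). -/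

import Mathlib

open Finset

/-- Regret decomposition lemma (Lemma 1). In a finite rooted tree of
player-`i` infosets (`Inf`, with available actions `A I`, children `C I a`,
disjoint descendant sets `D`, a height function witnessing well-foundedness,
immediate utilities `u`, and values `V` defined recursively and depending only on
the plan restricted to the subtree), the cumulative subtree regret at an infoset
`I` equals the max over actions at `I` of the laminar utility plus the children's
subtree regrets, minus the realized laminar utility. -/
theorem stmt10
    {Inf : Type*} [Fintype Inf] [DecidableEq Inf]       -- infosets
    {α : Type*} [Fintype α] [DecidableEq α]             -- actions
    (A : Inf → Finset α) (hA : ∀ I, (A I).Nonempty)     -- available actions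
    (C : Inf → α → Finset Inf)                          -- children infosets
    (ht : Inf → ℕ) (hht : ∀ I a I', I' ∈ C I a → ht I' < ht I)  -- tree is well-founded
    (D : Inf → Finset Inf)                              -- subtree (descendants incl. itself)
    (hDself : ∀ I, I ∈ D I)
    (hDsub : ∀ I a I', I' ∈ C I a → D I' ⊆ D I \ {I})
    (hDdisj : ∀ I a, ∀ I' ∈ C I a, ∀ I'' ∈ C I a, I' ≠ I'' → Disjoint (D I') (D I''))
    (u : ℕ → Inf → α → ℝ)                               -- immediate utilities
    (V : ℕ → (Inf → α) → Inf → ℝ)                       -- subtree values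
    (hV : ∀ t σ I, V t σ I = u t I (σ I) + ∑ I' ∈ C I (σ I), V t σ I')
    (hloc : ∀ t σ σ' I, (∀ J ∈ D I, σ J = σ' J) → V t σ I = V t σ' I)
    (σp : ℕ → Inf → α) (hσp : ∀ t I, σp t I ∈ A I)      -- played plans
    (hne : (Fintype.piFinset A).Nonempty)               -- the set of feasible plans
    (T : ℕ) (I : Inf) :
    (Fintype.piFinset A).sup' hne (fun σ => ∑ t ∈ Finset.range T, V t σ I)
        - ∑ t ∈ Finset.range T, V t (σp t) I
      =
    (A I).sup' (hA I) (fun a =>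
        (∑ t ∈ Finset.range T, (u t I a + ∑ I' ∈ C I a, V t (σp t) I'))
        + ∑ I' ∈ C I a,
            ((Fintype.piFinset A).sup' hne (fun σ => ∑ t ∈ Finset.range T, V t σ I')
              - ∑ t ∈ Finset.range T, V t (σp t) I'))
      - ∑ t ∈ Finset.range T,
          (u t I (σp t I) + ∑ I' ∈ C I (σp t I), V t (σp t) I') := by
  classical
  -- Key: the sup over plans decomposes
  have key : (Fintype.piFinset A).sup' hne (fun σ => ∑ t ∈ Finset.range T, V t σ I)
      = (A I).sup' (hA I) (fun a => ∑ t ∈ Finset.range T, u t I a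
          + ∑ I' ∈ C I a,
              (Fintype.piFinset A).sup' hne (fun σ => ∑ t ∈ Finset.range T, V t σ I')) := by
    apply le_antisymm
    · apply Finset.sup'_le
      intro σ hσ
      have hσI : σ I ∈ A I := Fintype.mem_piFinset.mp hσ I
      refine le_trans ?_ (Finset.le_sup' _ hσI)
      have h1 : ∑ t ∈ Finset.range T, V t σ I
          = ∑ t ∈ Finset.range T, u t I (σ I)
            + ∑ I' ∈ C I (σ I), ∑ t ∈ Finset.range T, V t σ I' := by
        rw [Finset.sum_comm, ← Finset.sum_add_distrib]
        exact Finset.sum_congr rfl fun t _ => hV t σ I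
      rw [h1]
      refine add_le_add (le_refl _) (Finset.sum_le_sum fun I' _ => ?_)
      exact Finset.le_sup' (fun σ => ∑ t ∈ Finset.range T, V t σ I') hσ
    · apply Finset.sup'_le
      intro a ha
      have hgex : ∀ I' : Inf, ∃ σ ∈ Fintype.piFinset A,
          (Fintype.piFinset A).sup' hne (fun σ => ∑ t ∈ Finset.range T, V t σ I')
            = ∑ t ∈ Finset.range T, V t σ I' :=
        fun I' => Finset.exists_mem_eq_sup' hne _
      choose g hg hgv using hgex
      obtain ⟨σ0, hσ0⟩ := id hne
      set σ : Inf → α := fun J =>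
        if J = I then a
        else if h : ∃ I', I' ∈ C I a ∧ J ∈ D I' then g h.choose J else σ0 J with hσdef
      have hσmem : σ ∈ Fintype.piFinset A := by
        refine Fintype.mem_piFinset.mpr fun J => ?_
        simp only [hσdef]
        split_ifs with h1 h2
        · exact h1 ▸ ha
        · exact Fintype.mem_piFinset.mp (hg _) J
        · exact Fintype.mem_piFinset.mp hσ0 J
      have hσI : σ I = a := by simp [hσdef]
      have hagree : ∀ I' ∈ C I a, ∀ J ∈ D I', σ J = g I' J := by
        intro I' hI' J hJ
        have hJI : J ∈ D I \ {I} := hDsub I a I' hI' hJ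
        have hJne : J ≠ I := by
          simp only [Finset.mem_sdiff, Finset.mem_singleton] at hJI
          exact hJI.2
        have hex : ∃ I'', I'' ∈ C I a ∧ J ∈ D I'' := ⟨I', hI', hJ⟩
        simp only [hσdef, if_neg hJne, dif_pos hex]
        have hch := hex.choose_spec
        have hchoose : hex.choose = I' := by
          by_contra hne'
          exact Finset.disjoint_left.mp (hDdisj I a _ hch.1 I' hI' hne') hch.2 hJ
        rw [hchoose]
      have hval : ∑ t ∈ Finset.range T, V t σ I
          = ∑ t ∈ Finset.range T, u t I a
            + ∑ I' ∈ C I a,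
                (Fintype.piFinset A).sup' hne (fun σ => ∑ t ∈ Finset.range T, V t σ I') := by
        have h1 : ∀ t, V t σ I = u t I a + ∑ I' ∈ C I a, V t (g I') I' := by
          intro t
          rw [hV t σ I, hσI]
          congr 1
          exact Finset.sum_congr rfl fun I' hI' => hloc t σ (g I') I' (hagree I' hI')
        rw [Finset.sum_congr rfl fun t _ => h1 t, Finset.sum_add_distrib, Finset.sum_comm]
        congr 1
        exact Finset.sum_congr rfl fun I' _ => (hgv I').symm
      exact hval ▸ Finset.le_sup' (fun σ => ∑ t ∈ Finset.range T, V t σ I) hσmem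
  have hreal : ∑ t ∈ Finset.range T,
      (u t I (σp t I) + ∑ I' ∈ C I (σp t I), V t (σp t) I')
      = ∑ t ∈ Finset.range T, V t (σp t) I :=
    Finset.sum_congr rfl fun t _ => (hV t (σp t) I).symm
  rw [hreal, key]
  congr 1
  refine Finset.sup'_congr (hA I) rfl fun a _ => ?_
  rw [Finset.sum_add_distrib, Finset.sum_sub_distrib,
    Finset.sum_comm (s := Finset.range T) (t := C I a)]
  ring
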